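/- Define f(x,y) = h(xy)/(h(x)·y + h(y)·x) for (x,y) ∈ (0,1)². If (x*, y*) ∈ (0,1)² is a point at which f attains its minimum over (0,1)², then x* = y*. -/

import Mathlib

open Real Set

/-- The binary entropy function (base 2). -/
noncomputable def binEnt (x : ℝ) : ℝ :=
  -(x * Real.logb 2 x) - (1 - x) * Real.logb 2 (1 - x)

/-- `ψ u = h(e^u)/e^u · ln 2` in natural-log terms. -/
noncomputable def psiAux (u : ℝ) : ℝ :=
  -u - (Real.exp (-u) - 1) * Real.log (1 - Real.exp u)

lemma binEnt_pos {t : ℝ} (ht : t ∈ Set.Ioo (0:ℝ) 1) : 0 < binEnt t := by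
  obtain ⟨h0, h1⟩ := ht
  have h2 : Real.logb 2 t < 0 := Real.logb_neg one_lt_two h0 h1
  have h3 : Real.logb 2 (1 - t) < 0 := Real.logb_neg one_lt_two (by linarith) (by linarith)
  have : 0 < -(t * Real.logb 2 t) := by nlinarith
  have : 0 < -((1 - t) * Real.logb 2 (1 - t)) := by nlinarith
  unfold binEnt; linarith

lemma psiAux_hasDeriv {u : ℝ} (hu : u < 0) :
    HasDerivAt psiAux (Real.exp (-u) * Real.log (1 - Real.exp u)) u := by
  have he1 : Real.exp u < 1 := Real.exp_lt_one_iff.mpr hu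
  have hne : 1 - Real.exp u ≠ 0 := by linarith
  have d1 : HasDerivAt (fun v => Real.exp (-v)) (-Real.exp (-u)) u := by
    simpa [Function.comp_def] using (Real.hasDerivAt_exp (-u)).comp u ((hasDerivAt_id u).neg)
  have d2 : HasDerivAt (fun v => 1 - Real.exp v) (-Real.exp u) u := by
    simpa using ((Real.hasDerivAt_exp u).const_sub 1)
  have d3 : HasDerivAt (fun v => Real.log (1 - Real.exp v))
      (-Real.exp u / (1 - Real.exp u)) u := d2.log hne
  have d4 : HasDerivAt (fun v => (Real.exp (-v) - 1) * Real.log (1 - Real.exp v))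
      ((-Real.exp (-u)) * Real.log (1 - Real.exp u) +
        (Real.exp (-u) - 1) * (-Real.exp u / (1 - Real.exp u))) u :=
    (d1.sub_const 1).mul d3
  have d5 : HasDerivAt psiAux
      (-1 - ((-Real.exp (-u)) * Real.log (1 - Real.exp u) +
        (Real.exp (-u) - 1) * (-Real.exp u / (1 - Real.exp u)))) u := by
    exact ((hasDerivAt_id u).neg.sub d4)
  convert d5 using 1
  have hx : Real.exp u ≠ 0 := (Real.exp_pos u).ne'
  rw [Real.exp_neg]
  field_simp
  ring

lemma psiAux_deriv2_neg {u : ℝ} (hu : u < 0) :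
    HasDerivAt (fun v => Real.exp (-v) * Real.log (1 - Real.exp v))
      (-Real.exp (-u) * Real.log (1 - Real.exp u) - 1 / (1 - Real.exp u)) u ∧
    -Real.exp (-u) * Real.log (1 - Real.exp u) - 1 / (1 - Real.exp u) < 0 := by
  have he0 : (0:ℝ) < Real.exp u := Real.exp_pos u
  have he1 : Real.exp u < 1 := Real.exp_lt_one_iff.mpr hu
  have hne : 1 - Real.exp u ≠ 0 := by linarith
  constructor
  · have d1 : HasDerivAt (fun v => Real.exp (-v)) (-Real.exp (-u)) u := by
      simpa [Function.comp_def] using (Real.hasDerivAt_exp (-u)).comp u ((hasDerivAt_id u).neg)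
    have d3 : HasDerivAt (fun v => Real.log (1 - Real.exp v))
        (-Real.exp u / (1 - Real.exp u)) u :=
      (((Real.hasDerivAt_exp u).const_sub 1)).log hne
    have : HasDerivAt (fun v => Real.exp (-v) * Real.log (1 - Real.exp v))
        (-Real.exp (-u) * Real.log (1 - Real.exp u) + Real.exp (-u) * (-Real.exp u / (1 - Real.exp u))) u := d1.mul d3
    convert this using 1
    rw [Real.exp_neg]
    field_simp
    ring
  · -- need : exp(-u) * (- log (1 - exp u)) < 1/(1-exp u)
    set t := Real.exp u with ht
    have h1t : (0:ℝ) < 1 - t := by linarith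
    have key : Real.log ((1 - t)⁻¹) < (1 - t)⁻¹ - 1 := by
      apply Real.log_lt_sub_one_of_pos (inv_pos.mpr h1t)
      intro h
      have : (1 - t) = 1 := by
        field_simp at h
        linarith
      linarith
    rw [Real.log_inv] at key
    have h2 : (1 - t)⁻¹ - 1 = t / (1 - t) := by field_simp; ring
    rw [h2] at key
    -- key : -log(1-t) < t/(1-t)
    have key' : -Real.log (1 - t) * (1 - t) < t := by
      have := (lt_div_iff₀ h1t).mp key
      linarith [this]
    have hexp : Real.exp (-u) = t⁻¹ := by rw [Real.exp_neg]
    rw [hexp]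
    have expand : (-t⁻¹ * Real.log (1 - t) - 1 / (1 - t)) * (t * (1 - t)) =
        -Real.log (1 - t) * (1 - t) - t := by
      field_simp
    nlinarith [mul_pos he0 h1t, key', expand]

lemma psiAux_strictConcave : StrictConcaveOn ℝ (Set.Iio (0:ℝ)) psiAux := by
  have hder : ∀ u ∈ Set.Iio (0:ℝ), HasDerivAt psiAux
      (Real.exp (-u) * Real.log (1 - Real.exp u)) u := fun u hu => psiAux_hasDeriv hu
  apply strictConcaveOn_of_deriv2_neg (convex_Iio 0)
  · intro u hu
    exact (psiAux_hasDeriv hu).continuousAt.continuousWithinAt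
  · intro u hu
    rw [interior_Iio] at hu
    have heq : Set.EqOn (deriv psiAux)
        (fun v => Real.exp (-v) * Real.log (1 - Real.exp v)) (Set.Iio 0) := by
      intro v hv
      exact (psiAux_hasDeriv hv).deriv
    have h2 := (psiAux_deriv2_neg hu).1
    have : deriv (deriv psiAux) u = deriv (fun v => Real.exp (-v) * Real.log (1 - Real.exp v)) u := by
      apply Filter.EventuallyEq.deriv_eq
      exact Filter.eventuallyEq_of_mem (Iio_mem_nhds hu) heq
    simp only [Function.iterate_succ, Function.iterate_zero, Function.comp_apply, id]
    rw [this, h2.deriv]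
    exact (psiAux_deriv2_neg hu).2

lemma psiAux_log {t : ℝ} (ht : t ∈ Set.Ioo (0:ℝ) 1) :
    t * psiAux (Real.log t) = binEnt t * Real.log 2 := by
  obtain ⟨h0, h1⟩ := ht
  have hne : t ≠ 0 := h0.ne'
  have hl2 : Real.log 2 ≠ 0 := by positivity
  rw [psiAux, Real.exp_log h0, Real.exp_neg, Real.exp_log h0]
  unfold binEnt Real.logb
  field_simp

theorem min_on_diagonal (x y : ℝ) (hx : x ∈ Set.Ioo (0 : ℝ) 1) (hy : y ∈ Set.Ioo (0 : ℝ) 1)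
    (hmin : ∀ a ∈ Set.Ioo (0 : ℝ) 1, ∀ b ∈ Set.Ioo (0 : ℝ) 1,
      binEnt (x * y) / (binEnt x * y + binEnt y * x) ≤
        binEnt (a * b) / (binEnt a * b + binEnt b * a)) :
    x = y := by
  by_contra hne
  obtain ⟨hx0, hx1⟩ := hx
  obtain ⟨hy0, hy1⟩ := hy
  set lx := Real.log x with hlx
  set ly := Real.log y with hly
  have hlxn : lx < 0 := Real.log_neg hx0 hx1
  have hlyn : ly < 0 := Real.log_neg hy0 hy1
  have hlne : lx ≠ ly := fun h => hne (Real.log_injOn_pos (Set.mem_Ioi.2 hx0) (Set.mem_Ioi.2 hy0) h)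
  set m := (1/2 : ℝ) * lx + (1/2 : ℝ) * ly with hm
  have hmn : m < 0 := by rw [hm]; linarith
  set s := Real.exp m with hs
  have hs0 : 0 < s := Real.exp_pos m
  have hs1 : s < 1 := Real.exp_lt_one_iff.mpr hmn
  have hss : s * s = x * y := by
    rw [hs, ← Real.exp_add]
    have : m + m = lx + ly := by rw [hm]; ring
    rw [this, Real.exp_add, Real.exp_log hx0, Real.exp_log hy0]
  -- strict concavity
  have hcon := psiAux_strictConcave.2 (Set.mem_Iio.2 hlxn) (Set.mem_Iio.2 hlyn) hlne
    (by norm_num : (0:ℝ) < 1/2) (by norm_num : (0:ℝ) < 1/2) (by norm_num)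
  simp only [smul_eq_mul] at hcon
  -- hcon : 1/2 * psi lx + 1/2 * psi ly < psi m
  have hpx := psiAux_log ⟨hx0, hx1⟩
  have hpy := psiAux_log ⟨hy0, hy1⟩
  have hps : s * psiAux m = binEnt s * Real.log 2 := by
    have := psiAux_log ⟨hs0, hs1⟩
    rwa [Real.log_exp] at this
  have hl2 : (0:ℝ) < Real.log 2 := by positivity
  -- denominator inequality
  have hkey : (binEnt x * y + binEnt y * x) * Real.log 2 <
      (binEnt s * s + binEnt s * s) * Real.log 2 := by
    have e1 : (binEnt x * y + binEnt y * x) * Real.log 2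
        = y * (x * psiAux lx) + x * (y * psiAux ly) := by rw [hpx, hpy]; ring
    have e2 : (binEnt s * s + binEnt s * s) * Real.log 2 = 2 * (s * (s * psiAux m)) := by
      rw [hps]; ring
    rw [e1, e2]
    rw [← hm] at hcon
    have hmul := mul_lt_mul_of_pos_left hcon (mul_pos hx0 hy0)
    have e3 : s * (s * psiAux m) = (x * y) * psiAux m := by rw [← hss]; ring
    rw [e3]
    nlinarith [hmul]
  have hD : (binEnt x * y + binEnt y * x) < binEnt s * s + binEnt s * s :=
    lt_of_mul_lt_mul_right hkey hl2.le
  -- minimality at (s, s)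
  have hmin' := hmin s ⟨hs0, hs1⟩ s ⟨hs0, hs1⟩
  rw [hss] at hmin'
  have hnum : 0 < binEnt (x * y) := binEnt_pos ⟨by positivity, by nlinarith⟩
  have hDpos : 0 < binEnt x * y + binEnt y * x := by
    have := binEnt_pos ⟨hx0, hx1⟩
    have := binEnt_pos ⟨hy0, hy1⟩
    positivity
  have hEpos : 0 < binEnt s * s + binEnt s * s := by
    have := binEnt_pos ⟨hs0, hs1⟩
    positivity
  rw [div_le_div_iff₀ hDpos hEpos] at hmin'
  nlinarith [hmin', hnum, hD, hDpos]
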